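/- Let D₀ ∈ E^n, i < j, and let X₀ = K_V†(D₀) ∈ S^{n-1}_+ and Y = K_V*(E_{ij}) ∈ S^{n-1}_+. Then Y X₀ = 0 if and only if trace(D₀ E_{ij}) = 0, i.e., if and only if (D₀)_{ij} = 0. -/

import Mathlib

open Matrix BigOperators

noncomputable section

def IsEDM {n : ℕ} (D : Matrix (Fin n) (Fin n) ℝ) : Prop :=
  ∃ (d : ℕ) (p : Fin n → Fin d → ℝ), ∀ i j, D i j = ∑ t, (p i t - p j t) ^ 2

def unitMat {n : ℕ} (i j : Fin n) : Matrix (Fin n) (Fin n) ℝ :=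
  Matrix.single i j 1 + Matrix.single j i 1

def lind {ι : Type*} [Fintype ι] (M : Matrix ι ι ℝ) : Matrix ι ι ℝ :=
  Matrix.of fun i j => M i i + M j j - 2 * M i j

/-- `K*(D) = 2(Diag(De) - D)`. -/
def lindAdj {ι : Type*} [Fintype ι] [DecidableEq ι] (D : Matrix ι ι ℝ) : Matrix ι ι ℝ :=
  (2 : ℝ) • (Matrix.diagonal (D *ᵥ fun _ => (1 : ℝ)) - D)

lemma lindAdj_unitMat {n : ℕ} (i j : Fin n) (hij : i ≠ j) :
    lindAdj (unitMat i j) = (2 : ℝ) • Matrix.of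
      (fun a b => (Pi.single i 1 - Pi.single j 1 : Fin n → ℝ) a *
        (Pi.single i 1 - Pi.single j 1 : Fin n → ℝ) b) := by
  ext a b
  have h1 : (unitMat i j *ᵥ fun _ => (1:ℝ)) = fun a =>
      (if a = i then 1 else 0) + (if a = j then 1 else 0) := by
    funext a
    simp [unitMat, add_mulVec, single_mulVec, Function.update_apply]
  simp only [lindAdj, Matrix.smul_apply, Matrix.sub_apply, Matrix.diagonal_apply,
    Matrix.of_apply, smul_eq_mul, Pi.sub_apply, Pi.single_apply]
  rw [h1]
  simp only [unitMat, Matrix.add_apply, Matrix.single, Matrix.of_apply]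
  by_cases hai : a = i <;> by_cases haj : a = j <;> by_cases hbi : b = i <;>
    by_cases hbj : b = j <;> simp_all [eq_comm]

lemma trace_mul_stdBasis {n : ℕ} (A : Matrix (Fin n) (Fin n) ℝ) (a b : Fin n) :
    Matrix.trace (A * Matrix.single a b 1) = A b a := by
  simp [Matrix.trace, Matrix.diag, Matrix.mul_apply, Matrix.single, ite_and,
    Finset.sum_ite_eq, Finset.sum_ite_eq']


/-- For `X₀ = K_V†(D₀) ⪰ 0` and `Y = K_V*(E_{ij}) ⪰ 0`:
`Y X₀ = 0 ⟺ trace(D₀ E_{ij}) = 0 ⟺ (D₀)_{ij} = 0`. -/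
theorem YX0_orthogonality (n : ℕ) (D₀ : Matrix (Fin n) (Fin n) ℝ)
    (hD₀ : IsEDM D₀) (i j : Fin n) (hij : i < j)
    (V : Matrix (Fin n) (Fin (n - 1)) ℝ)
    (hV : Vᵀ * V = 1) (hVe : Vᵀ *ᵥ (fun _ => (1 : ℝ)) = 0)
    (X₀ : Matrix (Fin (n - 1)) (Fin (n - 1)) ℝ) (hX₀ : X₀.PosSemidef)
    (hKX₀ : lind (V * X₀ * Vᵀ) = D₀)
    (Y : Matrix (Fin (n - 1)) (Fin (n - 1)) ℝ)
    (hY : Y = Vᵀ * lindAdj (unitMat i j) * V) :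
    (Y * X₀ = 0 ↔ Matrix.trace (D₀ * unitMat i j) = 0) ∧
    (Y * X₀ = 0 ↔ D₀ i j = 0) := by
  have hne : i ≠ j := hij.ne
  set u : Fin n → ℝ := (Pi.single i 1 - Pi.single j 1 : Fin n → ℝ) with hu
  set w : Fin (n - 1) → ℝ := Vᵀ *ᵥ u with hw
  -- Y = 2 w wᵀ
  have hYw : Y = (2 : ℝ) • Matrix.of (fun a b => w a * w b) := by
    rw [hY, lindAdj_unitMat i j hne]
    ext a b
    simp only [Matrix.mul_apply, Matrix.smul_apply, Matrix.of_apply,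
      Matrix.transpose_apply, smul_eq_mul, hw, Matrix.mulVec, dotProduct,
      Matrix.transpose_apply]
    rw [Finset.sum_mul_sum]
    rw [Finset.sum_comm]
    rw [Finset.mul_sum]
    refine Finset.sum_congr rfl fun d _ => ?_
    rw [Finset.sum_mul, Finset.mul_sum]
    exact Finset.sum_congr rfl fun c _ => by ring
  -- symmetry of X₀
  have hX₀s : X₀ᵀ = X₀ := by
    have := hX₀.1
    exact (by simpa [Matrix.conjTranspose, Matrix.map] using this : X₀.IsSymm)
  -- D₀ i j = wᵀ X₀ w
  have hMs : (V * X₀ * Vᵀ) i j = (V * X₀ * Vᵀ) j i := by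
    have : (V * X₀ * Vᵀ)ᵀ = V * X₀ * Vᵀ := by
      rw [Matrix.transpose_mul, Matrix.transpose_mul, Matrix.transpose_transpose, hX₀s,
        Matrix.mul_assoc]
    conv_lhs => rw [← this]
    rfl
  have hDq : D₀ i j = w ⬝ᵥ X₀ *ᵥ w := by
    have h1 : w ⬝ᵥ X₀ *ᵥ w = u ⬝ᵥ (V * X₀ * Vᵀ) *ᵥ u := by
      rw [hw, Matrix.mulVec_mulVec, Matrix.mulVec_transpose, Matrix.dotProduct_mulVec,
        Matrix.dotProduct_mulVec, Matrix.vecMul_vecMul, Matrix.mul_assoc]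
    rw [h1, ← hKX₀]
    simp only [hu, lind, Matrix.of_apply, Matrix.mulVec_sub, sub_dotProduct,
      dotProduct_sub, Matrix.mulVec_single_one, mul_one, single_dotProduct, one_mul, Matrix.col_apply, Pi.sub_apply]
    rw [← hMs]
    ring
  -- trace(D₀ E) = 2 D₀ i j
  have hDsym : D₀ j i = D₀ i j := by
    obtain ⟨d, p, hp⟩ := hD₀
    rw [hp, hp]
    exact Finset.sum_congr rfl fun t _ => by ring
  have htrD : Matrix.trace (D₀ * unitMat i j) = 2 * D₀ i j := by
    rw [unitMat, Matrix.mul_add, Matrix.trace_add, trace_mul_stdBasis, trace_mul_stdBasis,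
      hDsym]
    ring
  -- trace(Y X₀) = 2 wᵀ X₀ w
  have htrY : Matrix.trace (Y * X₀) = 2 * (w ⬝ᵥ X₀ *ᵥ w) := by
    rw [hYw]
    simp only [Matrix.trace, Matrix.diag, Matrix.mul_apply, Matrix.smul_apply,
      Matrix.of_apply, smul_eq_mul, dotProduct, Matrix.mulVec, Finset.mul_sum]
    rw [Finset.sum_comm]
    exact Finset.sum_congr rfl fun c _ => Finset.sum_congr rfl fun b _ => by ring
  -- main iff
  have key : Y * X₀ = 0 ↔ D₀ i j = 0 := by
    constructor
    · intro h
      have : Matrix.trace (Y * X₀) = 0 := by rw [h, Matrix.trace_zero]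
      rw [htrY] at this
      rw [hDq]
      linarith
    · intro h
      rw [hDq] at h
      have hx : X₀ *ᵥ w = 0 := by
        rw [← hX₀.dotProduct_mulVec_zero_iff w]
        simpa using h
      have hwX : w ᵥ* X₀ = 0 := by
        rw [← Matrix.mulVec_transpose, hX₀s, hx]
      ext a b
      rw [hYw]
      simp only [Matrix.mul_apply, Matrix.smul_apply, Matrix.of_apply, smul_eq_mul,
        Matrix.zero_apply]
      have : ∑ c, w c * X₀ c b = 0 := congrFun hwX b
      calc ∑ c, 2 * (w a * w c) * X₀ c b = 2 * w a * ∑ c, w c * X₀ c b := by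
            rw [Finset.mul_sum]; exact Finset.sum_congr rfl fun c _ => by ring
        _ = 0 := by rw [this]; ring
  refine ⟨?_, key⟩
  rw [key, htrD]
  constructor
  · intro h; rw [h]; ring
  · intro h; linarith
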